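/- Let a, b, c be integers with a ≠ 0, let q(x) = a·x² + b·x + c, and let u, v be positive integers. Put Q₀ = {x ∈ ℤ : q(x) ≡ 0 (mod u·v)}, Q₁ = {x ∈ ℤ : q(x) ≡ 0 (mod v)}, S₀ = {x ∈ Q₀ : 0 ≤ x < u·v}, and S₁ = {x ∈ Q₁ : 0 ≤ x < v}. Then Q₁ is nonempty and Q₁ = Q₀ if and only if S₁ is nonempty and S₀ = {s + j·v : s ∈ S₁, j ∈ {0, 1, …, u − 1}}. -/
import Mathlib

private lemma qcong (a b c n x y : ℤ) (h : x ≡ y [ZMOD n]) :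
    n ∣ a * x ^ 2 + b * x + c ↔ n ∣ a * y ^ 2 + b * y + c := by
  have hq : a * x ^ 2 + b * x + c ≡ a * y ^ 2 + b * y + c [ZMOD n] :=
    (((h.pow 2).mul_left a).add (h.mul_left b)).add_right c
  constructor
  · intro hd
    exact (Int.modEq_zero_iff_dvd).1 (hq.symm.trans ((Int.modEq_zero_iff_dvd).2 hd))
  · intro hd
    exact (Int.modEq_zero_iff_dvd).1 (hq.trans ((Int.modEq_zero_iff_dvd).2 hd))

private lemma emod_modEq (x n : ℤ) : x % n ≡ x [ZMOD n] :=
  Int.emod_emod_of_dvd x dvd_rfl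

/-- Equivalence (a) ⟺ (b) of the paper's Lemma 3.2. -/
theorem lemma_3_2_a_iff_b (a b c u v : ℤ) (ha : a ≠ 0) (hu : 0 < u) (hv : 0 < v) :
    (({x : ℤ | v ∣ a * x ^ 2 + b * x + c}).Nonempty ∧
      {x : ℤ | v ∣ a * x ^ 2 + b * x + c} = {x : ℤ | u * v ∣ a * x ^ 2 + b * x + c}) ↔
    (({x : ℤ | v ∣ a * x ^ 2 + b * x + c ∧ 0 ≤ x ∧ x < v}).Nonempty ∧
      {x : ℤ | u * v ∣ a * x ^ 2 + b * x + c ∧ 0 ≤ x ∧ x < u * v} =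
        {y : ℤ | ∃ s : ℤ, (v ∣ a * s ^ 2 + b * s + c ∧ 0 ≤ s ∧ s < v) ∧
          ∃ j : ℤ, 0 ≤ j ∧ j < u ∧ y = s + j * v}) := by
  have huv : 0 < u * v := mul_pos hu hv
  constructor
  · rintro ⟨⟨x, hx⟩, hQ⟩
    constructor
    · refine ⟨x % v, ?_, Int.emod_nonneg x hv.ne', Int.emod_lt_of_pos x hv⟩
      exact (qcong a b c v (x % v) x (emod_modEq x v)).2 hx
    · ext y
      simp only [Set.mem_setOf_eq]
      constructor
      · rintro ⟨hd, hy0, hyu⟩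
        refine ⟨y % v, ⟨?_, Int.emod_nonneg y hv.ne', Int.emod_lt_of_pos y hv⟩,
          y / v, Int.ediv_nonneg hy0 hv.le, ?_, ?_⟩
        · exact (qcong a b c v (y % v) y (emod_modEq y v)).2 (dvd_trans ⟨u, by ring⟩ hd)
        · exact Int.ediv_lt_of_lt_mul hv (by linarith [mul_comm u v])
        · have := Int.mul_ediv_add_emod y v; linarith
      · rintro ⟨s, ⟨hs, hs0, hsv⟩, j, hj0, hju, rfl⟩
        refine ⟨?_, by nlinarith, by nlinarith⟩
        have hv' : v ∣ a * (s + j * v) ^ 2 + b * (s + j * v) + c := by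
          refine (qcong a b c v (s + j * v) s ?_).2 hs
          have : s + j * v - s = j * v := by ring
          exact Int.ModEq.symm (Int.modEq_iff_dvd.2 (by rw [show s + j*v - s = v * j by ring]; exact Dvd.intro j rfl))
        exact Set.ext_iff.1 hQ (s + j * v) |>.1 hv'
  · rintro ⟨⟨s0, hs0, hs00, hs0v⟩, hS⟩
    constructor
    · exact ⟨s0, hs0⟩
    · ext x
      simp only [Set.mem_setOf_eq]
      constructor
      · intro hx
        -- reduce x mod uv
        set x' := x % (u * v) with hx'
        have hcong : x' ≡ x [ZMOD u * v] := emod_modEq x (u * v)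
        have hx'v : v ∣ a * x' ^ 2 + b * x' + c := by
          refine (qcong a b c v x' x ?_).2 hx
          exact Int.ModEq.of_dvd ⟨u, mul_comm u v⟩ hcong
        have hmem : x' ∈ {y : ℤ | ∃ s : ℤ, (v ∣ a * s ^ 2 + b * s + c ∧ 0 ≤ s ∧ s < v) ∧
            ∃ j : ℤ, 0 ≤ j ∧ j < u ∧ y = s + j * v} := by
          refine ⟨x' % v, ⟨?_, Int.emod_nonneg x' hv.ne', Int.emod_lt_of_pos x' hv⟩,
            x' / v, Int.ediv_nonneg (Int.emod_nonneg x huv.ne') hv.le, ?_, ?_⟩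
          · exact (qcong a b c v (x' % v) x' (emod_modEq x' v)).2 hx'v
          · refine Int.ediv_lt_of_lt_mul hv ?_
            have := Int.emod_lt_of_pos x huv
            linarith [mul_comm u v]
          · have := Int.mul_ediv_add_emod x' v; linarith
        rw [← hS] at hmem
        exact (qcong a b c (u * v) x x' hcong.symm).2 hmem.1
      · intro hx
        exact dvd_trans ⟨u, mul_comm u v⟩ hx
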